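/- arXiv:2010.14928 — 3 statements merged into one kernel-verified Lean document; each statement's English description precedes it below -/
import Mathlib

section
/- Let E and F be finite-dimensional real inner product spaces, n a positive integer, K : (Fin n → E) → F a descriptor, and φ̄ : Fin n → E a fixed observation, with energy E_φ̄(μ) = (1/2)‖K(μ) − K(φ̄)‖². Assume that for every configuration μ : Fin n → E and every index i, the map y ↦ K(Function.update μ i (μ i + y)) is differentiable, and let G(μ) := fun i => μ i − γ • ∇_i E_φ̄(μ) be the particle gradient-descent step for a fixed step size γ > 0; assume G is Borel measurable. Let T : E → E, T x = A x + b be a rigid transformation with A a linear isometry equivalence of E and b ∈ E, and assume K is T-invariant, i.e. K(T ∘ μ) = K(μ) for all μ. If P is a Borel probability measure on Fin n → E that is invariant under the map μ ↦ T ∘ μ (i.e. the pushforward of P by this map equals P), then for every k ∈ ℕ the pushforward of P by the k-fold iterate G^[k] is also invariant under μ ↦ T ∘ μ. -/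
open MeasureTheory

lemma grad_comp_isom {E : Type*} [NormedAddCommGroup E] [InnerProductSpace ℝ E]
    [CompleteSpace E] (f : E → ℝ) (hf : DifferentiableAt ℝ f 0) (A : E ≃ₗᵢ[ℝ] E) :
    gradient (fun y => f (A.symm y)) 0 = A (gradient f 0) := by
  have hgrad : HasGradientAt f (gradient f 0) 0 := hf.hasGradientAt
  have hfd : HasFDerivAt f (InnerProductSpace.toDual ℝ E (gradient f 0)) 0 :=
    hgrad.hasFDerivAt
  have hA : HasFDerivAt (fun y : E => A.symm y)
      (A.symm.toLinearIsometry.toContinuousLinearMap) 0 :=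
    A.symm.toLinearIsometry.toContinuousLinearMap.hasFDerivAt
  have h0 : (A.symm : E → E) 0 = 0 := map_zero _
  have hcomp : HasFDerivAt (fun y => f (A.symm y))
      ((InnerProductSpace.toDual ℝ E (gradient f 0)).comp
        A.symm.toLinearIsometry.toContinuousLinearMap) 0 := by
    have hfd' : HasFDerivAt f (InnerProductSpace.toDual ℝ E (gradient f 0))
        ((fun y : E => A.symm y) 0) := by rw [show (fun y : E => A.symm y) 0 = 0 from h0]; exact hfd
    exact hfd'.comp 0 hA
  have heq : (InnerProductSpace.toDual ℝ E (A (gradient f 0))) =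
      (InnerProductSpace.toDual ℝ E (gradient f 0)).comp
        A.symm.toLinearIsometry.toContinuousLinearMap := by
    ext y
    simp [InnerProductSpace.toDual_apply_apply]
    calc inner ℝ (A (gradient f 0)) y = inner ℝ (A (gradient f 0)) (A (A.symm y)) := by simp
    _ = (inner ℝ (gradient f 0) (A.symm y) : ℝ) := A.inner_map_map _ _
    _ = (fderiv ℝ f 0) (A.symm y) := by rw [hfd.fderiv, InnerProductSpace.toDual_apply_apply]
  have : HasGradientAt (fun y => f (A.symm y)) (A (gradient f 0)) 0 := by
    rw [hasGradientAt_iff_hasFDerivAt, heq]; exact hcomp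
  exact this.gradient

/-- **Theorem 1 of the paper (labelled-tuple version).**
If the descriptor `K` is invariant under the rigid transformation `T x = A x + b`,
and the law `P` of the initial configuration is invariant under `μ ↦ T ∘ μ`, then the law
of the configuration after `k` particle gradient-descent steps is also invariant
under `μ ↦ T ∘ μ`. -/
theorem particle_gradient_descent_invariance
    {E F : Type*}
    [NormedAddCommGroup E] [InnerProductSpace ℝ E] [FiniteDimensional ℝ E]
    [MeasurableSpace E] [BorelSpace E]
    [NormedAddCommGroup F] [InnerProductSpace ℝ F] [FiniteDimensional ℝ F]
    {n : ℕ} (hn : 0 < n)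
    (K : (Fin n → E) → F) (φ : Fin n → E)
    (Energy : (Fin n → E) → ℝ)
    (hEnergy : ∀ μ, Energy μ = (1 / 2 : ℝ) * ‖K μ - K φ‖ ^ 2)
    (hKdiff : ∀ (μ : Fin n → E) (i : Fin n),
      Differentiable ℝ (fun y : E => K (Function.update μ i (μ i + y))))
    (γ : ℝ) (hγ : 0 < γ)
    (G : (Fin n → E) → (Fin n → E))
    (hG : ∀ (μ : Fin n → E) (i : Fin n),
      G μ i = μ i - γ • gradient (fun y : E => Energy (Function.update μ i (μ i + y))) 0)
    (hGmeas : Measurable G)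
    (A : E ≃ₗᵢ[ℝ] E) (b : E) (T : E → E) (hT : ∀ x, T x = A x + b)
    (hKinv : ∀ μ : Fin n → E, K (T ∘ μ) = K μ)
    (P : Measure (Fin n → E)) [IsProbabilityMeasure P]
    (hPinv : Measure.map (fun μ : Fin n → E => T ∘ μ) P = P)
    (k : ℕ) :
    Measure.map (fun μ : Fin n → E => T ∘ μ) (Measure.map (G^[k]) P)
      = Measure.map (G^[k]) P := by
  -- Energy is invariant under T
  have hEinv : ∀ ν : Fin n → E, Energy (T ∘ ν) = Energy ν := by
    intro ν; rw [hEnergy, hEnergy, hKinv]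
  -- Energy along a single-particle perturbation is differentiable
  have hEdiff : ∀ (μ : Fin n → E) (i : Fin n),
      Differentiable ℝ (fun y : E => Energy (Function.update μ i (μ i + y))) := by
    intro μ i
    have h1 : Differentiable ℝ
        (fun y : E => K (Function.update μ i (μ i + y)) - K φ) :=
      (hKdiff μ i).sub_const (K φ)
    have h2 : Differentiable ℝ
        (fun y : E => ‖K (Function.update μ i (μ i + y)) - K φ‖ ^ 2) := by
      have := h1.inner h1 (𝕜 := ℝ)
      simpa [real_inner_self_eq_norm_sq] using this
    have h3 := h2.const_mul (1 / 2 : ℝ)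
    have hfe : (fun y : E => Energy (Function.update μ i (μ i + y)))
        = fun y : E => (1 / 2 : ℝ) * ‖K (Function.update μ i (μ i + y)) - K φ‖ ^ 2 :=
      funext fun y => hEnergy _
    rw [hfe]; exact h3
  -- key identity: update of T∘μ corresponds to update of μ via A.symm
  have hupd : ∀ (μ : Fin n → E) (i : Fin n) (y : E),
      Function.update (T ∘ μ) i ((T ∘ μ) i + y)
        = T ∘ Function.update μ i (μ i + A.symm y) := by
    intro μ i y
    funext j
    by_cases h : j = i
    · subst h
      simp only [Function.update_self, Function.comp_apply, hT, map_add, map_sub,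
        LinearIsometryEquiv.apply_symm_apply]
      abel
    · simp [Function.update_of_ne h]
  -- the energy landscapes correspond
  have hfun : ∀ (μ : Fin n → E) (i : Fin n),
      (fun y : E => Energy (Function.update (T ∘ μ) i ((T ∘ μ) i + y)))
        = fun y : E => Energy (Function.update μ i (μ i + A.symm y)) := by
    intro μ i
    funext y
    rw [hupd μ i y, hEinv]
  -- gradient equivariance
  have hgradeq : ∀ (μ : Fin n → E) (i : Fin n),
      gradient (fun y : E => Energy (Function.update (T ∘ μ) i ((T ∘ μ) i + y))) 0
        = A (gradient (fun y : E => Energy (Function.update μ i (μ i + y))) 0) := by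
    intro μ i
    rw [hfun μ i]
    exact grad_comp_isom _ ((hEdiff μ i) 0) A
  -- G is equivariant
  have hGT : ∀ μ : Fin n → E, G (T ∘ μ) = T ∘ G μ := by
    intro μ
    funext i
    rw [hG, hgradeq μ i]
    have hr : (T ∘ G μ) i = T (G μ i) := rfl
    rw [hr, hG]
    simp only [Function.comp_apply, hT, map_sub, _root_.map_smul]
    abel
  -- iterate equivariance
  have hGTk : ∀ μ : Fin n → E, G^[k] (T ∘ μ) = T ∘ G^[k] μ := by
    intro μ
    induction k with
    | zero => simp
    | succ m ih =>
      rw [Function.iterate_succ_apply', Function.iterate_succ_apply', ih, hGT]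
  -- measurability of μ ↦ T ∘ μ
  have hTc : Continuous T := by
    have : T = fun x => A x + b := funext hT
    rw [this]; exact (A.continuous).add continuous_const
  have hTmeas : Measurable (fun μ : Fin n → E => T ∘ μ) :=
    measurable_pi_lambda _ (fun i => hTc.measurable.comp (measurable_pi_apply i))
  have hGk : Measurable (G^[k]) := hGmeas.iterate k
  calc Measure.map (fun μ : Fin n → E => T ∘ μ) (Measure.map (G^[k]) P)
      = Measure.map ((fun μ : Fin n → E => T ∘ μ) ∘ G^[k]) P :=
        Measure.map_map hTmeas hGk
    _ = Measure.map (G^[k] ∘ (fun μ : Fin n → E => T ∘ μ)) P := by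
        congr 1; funext μ; simp [Function.comp, hGTk μ]
    _ = Measure.map (G^[k]) (Measure.map (fun μ : Fin n → E => T ∘ μ) P) :=
        (Measure.map_map hGk hTmeas).symm
    _ = Measure.map (G^[k]) P := by rw [hPinv]
end

section
/- Let E and F be finite-dimensional real inner product spaces, n a positive integer, K : (Fin n → E) → F a descriptor, φ̄ : Fin n → E a fixed observation, and energy E_φ̄(μ) = (1/2)‖K(μ) − K(φ̄)‖². Assume that for every configuration μ and every index i, the map y ↦ K(Function.update μ i (μ i + y)) is differentiable, and let G(μ) := fun i => μ i − γ • ∇_i E_φ̄(μ) for a fixed step size γ > 0. Let T : E → E, T x = A x + b be a rigid transformation with A a linear isometry equivalence of E and b ∈ E, and assume K is T-invariant. Then the gradient-descent step is T-equivariant: for every configuration μ, G(T ∘ μ) = T ∘ G(μ). -/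
open Function

/-- Gradient of a composition with a linear isometry equivalence. -/
lemma hasGradientAt_comp_isometry
    {E : Type*} [NormedAddCommGroup E] [InnerProductSpace ℝ E] [CompleteSpace E]
    (A : E ≃ₗᵢ[ℝ] E) (h : E → ℝ) (g x : E)
    (hg : HasGradientAt h g (A x)) :
    HasGradientAt (fun y => h (A y)) (A.symm g) x := by
  rw [hasGradientAt_iff_hasFDerivAt] at hg ⊢
  have := hg.comp x (A.toContinuousLinearEquiv.toContinuousLinearMap.hasFDerivAt (x := x))
  refine HasFDerivAt.congr_fderiv this ?_
  ext v
  simp only [ContinuousLinearMap.coe_comp', Function.comp_apply,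
    InnerProductSpace.toDual_apply_apply, LinearIsometryEquiv.coe_toContinuousLinearEquiv,
    ContinuousLinearEquiv.coe_coe]
  rw [← A.inner_map_map (A.symm g) v, A.apply_symm_apply]

/-- **Equivariance of the particle gradient-descent step** (key identity in the proof of
Theorem 1 of the paper): if the descriptor `K` is invariant under the rigid transformation
`T x = A x + b`, then `G (T ∘ μ) = T ∘ G μ`. -/
theorem particle_gradient_descent_step_equivariant
    {E F : Type*}
    [NormedAddCommGroup E] [InnerProductSpace ℝ E] [FiniteDimensional ℝ E]
    [NormedAddCommGroup F] [InnerProductSpace ℝ F] [FiniteDimensional ℝ F]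
    {n : ℕ} (hn : 0 < n)
    (K : (Fin n → E) → F) (φ : Fin n → E)
    (Energy : (Fin n → E) → ℝ)
    (hEnergy : ∀ μ, Energy μ = (1 / 2 : ℝ) * ‖K μ - K φ‖ ^ 2)
    (hKdiff : ∀ (μ : Fin n → E) (i : Fin n),
      Differentiable ℝ (fun y : E => K (Function.update μ i (μ i + y))))
    (γ : ℝ) (hγ : 0 < γ)
    (G : (Fin n → E) → (Fin n → E))
    (hG : ∀ (μ : Fin n → E) (i : Fin n),
      G μ i = μ i - γ • gradient (fun y : E => Energy (Function.update μ i (μ i + y))) 0)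
    (A : E ≃ₗᵢ[ℝ] E) (b : E) (T : E → E) (hT : ∀ x, T x = A x + b)
    (hKinv : ∀ μ : Fin n → E, K (T ∘ μ) = K μ) :
    ∀ μ : Fin n → E, G (T ∘ μ) = T ∘ G μ := by
  intro μ
  funext i
  set f : E → ℝ := fun y : E => Energy (Function.update μ i (μ i + y)) with hf
  -- differentiability of f
  have hfd : Differentiable ℝ f := by
    have h1 : Differentiable ℝ (fun y : E => K (Function.update μ i (μ i + y)) - K φ) :=
      (hKdiff μ i).sub_const _
    have h2 : Differentiable ℝ (fun y : E =>
        ‖K (Function.update μ i (μ i + y)) - K φ‖ ^ 2) := by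
      exact fun y => ((contDiff_norm_sq ℝ (E := F) (n := 1)).differentiable one_ne_zero).differentiableAt.comp y
        (h1 y)
    have : Differentiable ℝ (fun y : E =>
        (1 / 2 : ℝ) * ‖K (Function.update μ i (μ i + y)) - K φ‖ ^ 2) :=
      h2.const_mul _
    simpa [hf, hEnergy] using this
  set g : E := gradient f 0 with hg'
  have hgrad : HasGradientAt f g 0 := (hfd 0).hasGradientAt
  -- the transformed energy function
  have hkey : (fun y : E => Energy (Function.update (T ∘ μ) i ((T ∘ μ) i + y)))
      = fun y => f (A.symm y) := by
    funext y
    have hupd : Function.update (T ∘ μ) i ((T ∘ μ) i + y)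
        = T ∘ Function.update μ i (μ i + A.symm y) := by
      funext j
      by_cases hj : j = i
      · subst hj
        simp [Function.update_self, hT, map_add, A.apply_symm_apply, add_assoc, add_comm y b]
      · simp [Function.update_of_ne hj, Function.comp]
    rw [hupd, hf]
    simp only
    rw [hEnergy, hEnergy, hKinv]
  have hgrad2 : HasGradientAt (fun y : E => f (A.symm y)) (A g) 0 := by
    have := hasGradientAt_comp_isometry A.symm f g 0 (by simpa using hgrad)
    simpa using this
  have hgradval : gradient (fun y : E => Energy (Function.update (T ∘ μ) i ((T ∘ μ) i + y))) 0
      = A g := by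
    rw [hkey]; exact hgrad2.gradient
  rw [hG, hgradval]
  simp only [Function.comp_apply, hG μ i, hT]
  rw [← map_smul, ← hg', map_sub]
  abel
end

section
/- Let E and F be finite-dimensional real inner product spaces, n a positive integer, K : (Fin n → E) → F a descriptor, φ̄ : Fin n → E a fixed observation, and energy E_φ̄(μ) = (1/2)‖K(μ) − K(φ̄)‖². Assume that for every configuration μ and every index i, the map y ↦ K(Function.update μ i (μ i + y)) is differentiable. Let T : E → E, T x = A x + b be a rigid transformation with A a linear isometry equivalence of E and b ∈ E, and assume K is T-invariant. Then the particle gradients are equivariant: for every configuration μ and every index i, ∇_i E_φ̄(T ∘ μ) = A (∇_i E_φ̄(μ)). -/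
/-- **Equivariance of the particle gradients** (equation (22) in the proof of Theorem 1 of
the paper): if the descriptor `K` is invariant under the rigid transformation `T x = A x + b`,
then `∇_i E_φ̄ (T ∘ μ) = A (∇_i E_φ̄ μ)`. -/
theorem particle_gradient_equivariant
    {E F : Type*}
    [NormedAddCommGroup E] [InnerProductSpace ℝ E] [FiniteDimensional ℝ E]
    [NormedAddCommGroup F] [InnerProductSpace ℝ F] [FiniteDimensional ℝ F]
    {n : ℕ} (hn : 0 < n)
    (K : (Fin n → E) → F) (φ : Fin n → E)
    (Energy : (Fin n → E) → ℝ)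
    (hEnergy : ∀ μ, Energy μ = (1 / 2 : ℝ) * ‖K μ - K φ‖ ^ 2)
    (hKdiff : ∀ (μ : Fin n → E) (i : Fin n),
      Differentiable ℝ (fun y : E => K (Function.update μ i (μ i + y))))
    (A : E ≃ₗᵢ[ℝ] E) (b : E) (T : E → E) (hT : ∀ x, T x = A x + b)
    (hKinv : ∀ μ : Fin n → E, K (T ∘ μ) = K μ) :
    ∀ (μ : Fin n → E) (i : Fin n),
      gradient (fun y : E => Energy (Function.update (T ∘ μ) i ((T ∘ μ) i + y))) 0
        = A (gradient (fun y : E => Energy (Function.update μ i (μ i + y))) 0) := by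
  intro μ i
  set g : E → ℝ := fun y => Energy (Function.update μ i (μ i + y)) with hg
  -- g is differentiable
  have hgdiff : Differentiable ℝ g := by
    have : g = fun y => (1 / 2 : ℝ) * ‖(fun y : E => K (Function.update μ i (μ i + y))) y - K φ‖ ^ 2 := by
      funext y; simp [hg, hEnergy]
    rw [this]
    exact (((hKdiff μ i).sub_const (K φ)).norm_sq ℝ).const_mul _
  set u : E := gradient g 0 with hu
  have hgrad : HasGradientAt g u 0 := (hgdiff 0).hasGradientAt
  -- the LHS function equals g ∘ A.symm
  have hfun : (fun y : E => Energy (Function.update (T ∘ μ) i ((T ∘ μ) i + y)))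
      = fun y : E => g (A.symm y) := by
    funext y
    have hupd : T ∘ Function.update μ i (μ i + A.symm y)
        = Function.update (T ∘ μ) i ((T ∘ μ) i + y) := by
      funext j
      by_cases hji : j = i
      · subst hji
        simp [Function.update_self, hT, map_add]
        abel
      · simp [Function.update_of_ne hji]
    have hK : K (Function.update (T ∘ μ) i ((T ∘ μ) i + y))
        = K (Function.update μ i (μ i + A.symm y)) := by
      rw [← hupd, hKinv]
    simp only [hg, hEnergy, hK]
  rw [hfun]
  -- gradient of g ∘ A.symm at 0 is A u
  have hfd : HasFDerivAt g ((InnerProductSpace.toDual ℝ E) u) 0 := hgrad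
  have hcomp : HasFDerivAt (fun y : E => g (A.symm y))
      (((InnerProductSpace.toDual ℝ E) u).comp
        (A.symm.toLinearIsometry.toContinuousLinearMap)) 0 := by
    have hA : HasFDerivAt (fun y : E => A.symm y)
        (A.symm.toLinearIsometry.toContinuousLinearMap) 0 :=
      (A.symm.toLinearIsometry.toContinuousLinearMap).hasFDerivAt
    have hfd' : HasFDerivAt g ((InnerProductSpace.toDual ℝ E) u) (A.symm 0) := by
      simpa using hfd
    have := hfd'.comp (0 : E) hA
    exact this
  have hdual : ((InnerProductSpace.toDual ℝ E) u).comp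
        (A.symm.toLinearIsometry.toContinuousLinearMap)
      = (InnerProductSpace.toDual ℝ E) (A u) := by
    ext v
    simp only [ContinuousLinearMap.comp_apply, InnerProductSpace.toDual_apply_apply,
      LinearIsometry.coe_toContinuousLinearMap, LinearIsometryEquiv.coe_toLinearIsometry]
    rw [← A.inner_map_map u (A.symm v), A.apply_symm_apply]
  rw [hdual] at hcomp
  simpa using hcomp.hasGradientAt.gradient
end
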